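/- An oriented line in ℝ³ with holomorphic coordinates (ξ, η) ∈ ℂ² has squared distance to the origin equal to 4ηη̄/(1+ξξ̄)². Consequently, for a purely twisting rotationally symmetric congruence with η = i√(ψ(θ)) e^{iφ}/cos²(θ/2) and ξ = tan(θ/2)e^{iφ}, this squared distance equals 4ψ(θ). -/

import Mathlib

noncomputable section

open Real

/-- The squared distance to the origin of the oriented line with holomorphic coordinates
`(ξ, η)` is `4ηη̄/(1+ξξ̄)²`; for the purely twisting rotationally symmetric congruence
`η = i√ψ e^{iφ}/cos²(θ/2)`, `ξ = tan(θ/2)e^{iφ}`, this equals `4ψ`. -/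
theorem line_distance_squared :
    (∀ ξ η : ℂ,
      let x12 : ℂ := -2 * (η - (starRingEnd ℂ) η * ξ ^ 2) / (((1 + Complex.normSq ξ) : ℝ) : ℂ) ^ 2
      let x3 : ℝ :=
        (-2 * (η * (starRingEnd ℂ) ξ + (starRingEnd ℂ) η * ξ) /
            (((1 + Complex.normSq ξ) : ℝ) : ℂ) ^ 2).re
      ‖x12‖ ^ 2 + x3 ^ 2 = 4 * Complex.normSq η / (1 + Complex.normSq ξ) ^ 2) ∧
    (∀ θ φ ψ : ℝ, 0 < θ → θ < π → 0 ≤ ψ →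
      let ξ : ℂ := (Real.tan (θ / 2) : ℂ) * Complex.exp (Complex.I * φ)
      let η : ℂ := Complex.I * (Real.sqrt ψ : ℂ) * Complex.exp (Complex.I * φ) /
        ((Real.cos (θ / 2) : ℝ) : ℂ) ^ 2
      4 * Complex.normSq η / (1 + Complex.normSq ξ) ^ 2 = 4 * ψ) := by
  constructor
  · intro ξ η
    have hs : (0:ℝ) < 1 + Complex.normSq ξ := by
      have := Complex.normSq_nonneg ξ; linarith
    have hs2 : ((1 + Complex.normSq ξ) ^ 2) ≠ 0 := by positivity
    have key : Complex.normSq (-2 * (η - (starRingEnd ℂ) η * ξ ^ 2))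
        + ((-2 * (η * (starRingEnd ℂ) ξ + (starRingEnd ℂ) η * ξ)).re) ^ 2
        = 4 * Complex.normSq η * (1 + Complex.normSq ξ) ^ 2 := by
      obtain ⟨a, b⟩ := ξ
      obtain ⟨c, d⟩ := η
      simp only [Complex.normSq_mk, Complex.normSq_apply, Complex.mul_re, Complex.mul_im,
        Complex.sub_re, Complex.sub_im, Complex.add_re, Complex.add_im, Complex.neg_re,
        Complex.neg_im, Complex.conj_re, Complex.conj_im, Complex.re_ofNat, Complex.im_ofNat,
        pow_two]
      ring
    show ‖(-2 * (η - (starRingEnd ℂ) η * ξ ^ 2) /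
          (((1 + Complex.normSq ξ) : ℝ) : ℂ) ^ 2)‖ ^ 2
        + ((-2 * (η * (starRingEnd ℂ) ξ + (starRingEnd ℂ) η * ξ) /
            (((1 + Complex.normSq ξ) : ℝ) : ℂ) ^ 2).re) ^ 2
        = 4 * Complex.normSq η / (1 + Complex.normSq ξ) ^ 2
    rw [← Complex.ofReal_pow, Complex.sq_norm, Complex.normSq_div, Complex.normSq_ofReal,
      Complex.div_ofReal_re, div_pow, ← pow_two, ← add_div, key,
      show ((1 + Complex.normSq ξ) ^ 2) ^ 2
        = (1 + Complex.normSq ξ) ^ 2 * (1 + Complex.normSq ξ) ^ 2 by ring,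
      mul_div_assoc]
    rw [div_mul_eq_div_div, div_self hs2, one_div, div_eq_mul_inv]
  · intro θ φ ψ h0 hπ hψ
    have hcos : 0 < Real.cos (θ / 2) := by
      apply Real.cos_pos_of_mem_Ioo
      constructor <;> [linarith [pi_pos]; linarith]
    have hc : Real.cos (θ / 2) ≠ 0 := ne_of_gt hcos
    have habse : Complex.normSq (Complex.exp (Complex.I * φ)) = 1 := by
      rw [Complex.normSq_eq_norm_sq, Complex.norm_exp]
      simp
    have h1 : Complex.normSq ((Real.tan (θ / 2) : ℂ) * Complex.exp (Complex.I * φ))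
        = Real.tan (θ / 2) ^ 2 := by
      rw [Complex.normSq_mul, habse, Complex.normSq_ofReal, mul_one, sq]
    have h2 : Complex.normSq (Complex.I * (Real.sqrt ψ : ℂ) * Complex.exp (Complex.I * φ) /
        ((Real.cos (θ / 2) : ℝ) : ℂ) ^ 2) = ψ / Real.cos (θ / 2) ^ 4 := by
      rw [Complex.normSq_div, Complex.normSq_mul, Complex.normSq_mul, habse,
        Complex.normSq_I, Complex.normSq_ofReal, ← Complex.ofReal_pow, Complex.normSq_ofReal]
      rw [Real.mul_self_sqrt hψ]
      ring
    have h3 : 1 + Real.tan (θ / 2) ^ 2 = 1 / Real.cos (θ / 2) ^ 2 := by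
      rw [Real.tan_eq_sin_div_cos]
      field_simp
      exact Real.cos_sq_add_sin_sq _
    show 4 * Complex.normSq (Complex.I * (Real.sqrt ψ : ℂ) * Complex.exp (Complex.I * φ) /
        ((Real.cos (θ / 2) : ℝ) : ℂ) ^ 2) /
        (1 + Complex.normSq ((Real.tan (θ / 2) : ℂ) * Complex.exp (Complex.I * φ))) ^ 2 = 4 * ψ
    rw [h1, h2, h3]
    rw [div_pow, one_pow, one_div, div_inv_eq_mul,
      show (Real.cos (θ/2)^2)^2 = Real.cos (θ/2)^4 by ring,
      ← mul_div_assoc, div_mul_cancel₀ _ (by positivity : Real.cos (θ/2)^4 ≠ 0)]
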